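/- Let h and t be integers with h ≥ 4 and h - 3 < 2t ≤ 2(h - 3). Then there exists an approving configuration with parameters (n, d, h) where n = 2h + 2t + 1 and d = 2h - 1. -/

import Mathlib

open Finset
open scoped Classical

/-- The closed neighborhood `N[v] = {v} ∪ N(v)` of a vertex `v` in a simple graph `G`.
A `d`-regular graph with loops is modeled by a simple graph in which every
closed neighborhood has size `d`. -/
noncomputable def closedNbhd {n : ℕ} (G : SimpleGraph (Fin n)) (v : Fin n) : Finset (Fin n) :=
  Finset.univ.filter fun u => u = v ∨ G.Adj v u

/-- A configuration with parameters `(n, d, h)`: a simple graph `G` on `n` vertices all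
of whose closed neighborhoods have size `d` (i.e. a `d`-regular graph with loops),
together with an opinion function `f : V → {1, -1}` having exactly `h` happy vertices. -/
def IsConfig {n : ℕ} (d h : ℕ) (G : SimpleGraph (Fin n)) (f : Fin n → ℤ) : Prop :=
  (∀ v, (closedNbhd G v).card = d) ∧ (∀ v, f v = 1 ∨ f v = -1) ∧
  (Finset.univ.filter fun v => f v = 1).card = h

/-- The number of proponents: vertices `v` with `∑_{u ∈ N[v]} f u ≥ 1`. -/
noncomputable def numProponents {n : ℕ} (G : SimpleGraph (Fin n)) (f : Fin n → ℤ) : ℕ :=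
  (Finset.univ.filter fun v => 1 ≤ ∑ u ∈ closedNbhd G v, f u).card

/-- A configuration is approving if more than `n/2` of its vertices are proponents. -/
def IsApproving {n : ℕ} (G : SimpleGraph (Fin n)) (f : Fin n → ℤ) : Prop :=
  2 * numProponents G f > n

/-- `hmin n d`: the least `h` for which an approving configuration with parameters
`(n, d, h)` exists. -/
noncomputable def hmin (n d : ℕ) : ℕ :=
  sInf {h : ℕ | ∃ (G : SimpleGraph (Fin n)) (f : Fin n → ℤ), IsConfig d h G f ∧ IsApproving G f}

/-- `hmax n d`: the greatest `h ≤ n` for which a disapproving configuration with parameters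
`(n, d, h)` exists. -/
noncomputable def hmax (n d : ℕ) : ℕ :=
  sSup {h : ℕ | h ≤ n ∧
    ∃ (G : SimpleGraph (Fin n)) (f : Fin n → ℤ), IsConfig d h G f ∧ ¬ IsApproving G f}

/-- `hminN n`: the minimum of `hmin n d` over odd `d` with `1 ≤ d ≤ n`. -/
noncomputable def hminN (n : ℕ) : ℕ :=
  sInf {m : ℕ | ∃ d : ℕ, Odd d ∧ 1 ≤ d ∧ d ≤ n ∧ m = hmin n d}

namespace Stmt5Aux

/-- block size of position `x`: first block `[0, h+t)`, second `[h+t, 2h+2t+1)`. -/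
def bs (h t x : ℕ) : ℕ := if x < h + t then h + t else h + t + 1

/-- `close h t x y`: same block and circular distance (within the block) at most `t+1`. -/
def close (h t x y : ℕ) : Prop :=
  (x < h + t ↔ y < h + t) ∧
    ((y ≤ x + (t+1) ∧ x ≤ y + (t+1)) ∨ (x + bs h t x ≤ y + (t+1)) ∨
      (y + bs h t x ≤ x + (t+1)))

lemma close_refl (h t x : ℕ) : close h t x x := ⟨Iff.rfl, Or.inl ⟨by omega, by omega⟩⟩

lemma bs_congr {h t x y : ℕ} (h1 : x < h + t ↔ y < h + t) : bs h t y = bs h t x := by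
  unfold bs
  by_cases hx : x < h + t
  · rw [if_pos hx, if_pos (h1.mp hx)]
  · rw [if_neg hx, if_neg (fun hy => hx (h1.mpr hy))]

lemma close_symm {h t x y : ℕ} (hc : close h t x y) : close h t y x := by
  obtain ⟨h1, h2⟩ := hc
  refine ⟨h1.symm, ?_⟩
  rw [bs_congr h1]
  rcases h2 with ⟨a, b⟩ | hb | hc
  · exact Or.inl ⟨b, a⟩
  · exact Or.inr (Or.inr hb)
  · exact Or.inr (Or.inl hc)

/-- The graph: complement of the disjoint union of two circulants. -/
def G (h t : ℕ) : SimpleGraph (Fin (2*h+2*t+1)) where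
  Adj u v := u ≠ v ∧ ¬ close h t u.val v.val
  symm := ⟨fun u v ⟨hne, hnc⟩ => ⟨hne.symm, fun hc => hnc (close_symm hc)⟩⟩
  loopless := ⟨fun u ⟨hne, _⟩ => hne rfl⟩

lemma G_adj (h t : ℕ) (u v : Fin (2*h+2*t+1)) :
    (G h t).Adj u v ↔ u ≠ v ∧ ¬ close h t u.val v.val := Iff.rfl

/-- key counting lemma: a cyclic window of radius `tt+1` inside a block of size `m`
has exactly `2tt+3` elements. -/
lemma card_window {N : ℕ} (o m p tt : ℕ) (hm : 2*tt+3 ≤ m) (ho : o ≤ p) (hp : p < o + m)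
    (hN : o + m ≤ N) (cond : Fin N → Prop)
    (hcond : ∀ u : Fin N, cond u ↔ (o ≤ u.val ∧ u.val < o + m ∧
      ((u.val ≤ p + (tt+1) ∧ p ≤ u.val + (tt+1)) ∨ (p + m ≤ u.val + (tt+1)) ∨
        (u.val + m ≤ p + (tt+1))))) :
    (univ.filter cond).card = 2*tt+3 := by
  classical
  have hjlt : ∀ k, k < 2*tt+3 →
      (if p + k < o + (tt+1) then p + m + k - (tt+1)
        else if p + k - (tt+1) < o + m then p + k - (tt+1) else p + k - (tt+1) - m) < N := by
    intro k hk
    split_ifs <;> omega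
  rw [← card_range (2*tt+3)]
  refine Finset.card_bij'
    (fun (u : Fin N) (_ : u ∈ univ.filter cond) =>
      if u.val + m ≤ p + (tt+1) then u.val + m + (tt+1) - p
      else if u.val ≤ p + (tt+1) then u.val + (tt+1) - p else u.val + (tt+1) - p - m)
    (fun (k : ℕ) (hk : k ∈ range (2*tt+3)) => (⟨if p + k < o + (tt+1) then p + m + k - (tt+1)
      else if p + k - (tt+1) < o + m then p + k - (tt+1) else p + k - (tt+1) - m,
      hjlt k (mem_range.mp hk)⟩ : Fin N)) ?_ ?_ ?_ ?_
  · intro u hu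
    have hcu := (hcond u).mp ((mem_filter.mp hu).2)
    simp only [mem_range]
    split_ifs <;> omega
  · intro k hk
    have hk' : k < 2*tt+3 := mem_range.mp hk
    rw [mem_filter]
    refine ⟨mem_univ _, (hcond _).mpr ?_⟩
    simp only
    split_ifs <;> omega
  · intro u hu
    have hcu := (hcond u).mp ((mem_filter.mp hu).2)
    apply Fin.ext
    simp only
    split_ifs <;> omega
  · intro k hk
    have hk' : k < 2*tt+3 := mem_range.mp hk
    simp only
    split_ifs <;> omega

lemma card_close (h t : ℕ) (ht2 : t + 3 ≤ h) (v : Fin (2*h+2*t+1)) :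
    (univ.filter fun u : Fin (2*h+2*t+1) => close h t v.val u.val).card = 2*t+3 := by
  by_cases hv : v.val < h + t
  · refine card_window 0 (h+t) v.val t (by omega) (by omega) (by omega) (by omega) _
      (fun u => ?_)
    simp only [close, bs, if_pos hv]
    have hu := u.isLt
    omega
  · refine card_window (h+t) (h+t+1) v.val t (by omega) (by omega) ?_ (by omega) _
      (fun u => ?_)
    · have := v.isLt; omega
    · simp only [close, bs, if_neg hv]
      have hu := u.isLt
      omega

lemma card_filter_val_lt (N c : ℕ) (hc : c ≤ N) :
    (univ.filter fun v : Fin N => v.val < c).card = c := by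
  have : (univ.filter fun v : Fin N => v.val < c).card = (range c).card := by
    refine Finset.card_bij' (fun (v : Fin N) (_ : v ∈ univ.filter fun v : Fin N => v.val < c) => v.val)
      (fun (k : ℕ) (hk : k ∈ range c) => (⟨k, lt_of_lt_of_le (mem_range.mp hk) hc⟩ : Fin N))
      ?_ ?_ ?_ ?_
    · intro v hv; exact mem_range.mpr (mem_filter.mp hv).2
    · intro k hk; exact mem_filter.mpr ⟨mem_univ _, mem_range.mp hk⟩
    · intro v _; exact Fin.ext rfl
    · intro k _; rfl
  rw [this, card_range]

lemma card_closedNbhd (h t : ℕ) (h4 : 4 ≤ h) (ht2 : t + 3 ≤ h) (v : Fin (2*h+2*t+1)) :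
    (closedNbhd (G h t) v).card = 2*h - 1 := by
  classical
  have hC := card_close h t ht2 v
  have hvC : v ∈ univ.filter fun u : Fin (2*h+2*t+1) => close h t v.val u.val :=
    mem_filter.mpr ⟨mem_univ _, close_refl _ _ _⟩
  have heq : closedNbhd (G h t) v =
      insert v (univ \ (univ.filter fun u : Fin (2*h+2*t+1) => close h t v.val u.val)) := by
    ext u
    simp only [closedNbhd, mem_filter, mem_univ, true_and, mem_insert, mem_sdiff, G_adj]
    constructor
    · rintro (rfl | ⟨hne, hnc⟩)
      · exact Or.inl rfl
      · exact Or.inr hnc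
    · rintro (rfl | hnc)
      · exact Or.inl rfl
      · exact Or.inr ⟨fun hvu => hnc (hvu ▸ close_refl h t v.val), hnc⟩
  rw [heq, card_insert_of_notMem (by simp [hvC]), card_sdiff_of_subset (subset_univ _), hC, card_univ,
    Fintype.card_fin]
  omega

lemma mem_cn (h t : ℕ) (v u : Fin (2*h+2*t+1)) :
    u ∈ closedNbhd (G h t) v ↔ u = v ∨ (v ≠ u ∧ ¬ close h t v.val u.val) := by
  simp only [closedNbhd, mem_filter, mem_univ, true_and, G_adj]

lemma prop_sum (h t : ℕ) (h4 : 4 ≤ h) (ht2 : t + 3 ≤ h) (v : Fin (2*h+2*t+1))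
    (hv : ¬ v.val < h + t) :
    1 ≤ ∑ u ∈ closedNbhd (G h t) v, (if u.val < h then (1:ℤ) else -1) := by
  classical
  set N := closedNbhd (G h t) v with hN
  have hNcard : N.card = 2*h - 1 := card_closedNbhd h t h4 ht2 v
  have hfil : N.filter (fun u => u.val < h) = univ.filter fun u : Fin (2*h+2*t+1) => u.val < h := by
    apply Finset.Subset.antisymm
    · intro u hu
      exact mem_filter.mpr ⟨mem_univ _, (mem_filter.mp hu).2⟩
    · intro u hu
      have hu' : u.val < h := (mem_filter.mp hu).2
      refine mem_filter.mpr ⟨(mem_cn h t v u).mpr (Or.inr ⟨?_, ?_⟩), hu'⟩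
      · intro hvu
        rw [hvu] at hv; omega
      · intro hc
        exact hv (hc.1.mpr (by omega))
  have hc1 : (N.filter (fun u => u.val < h)).card = h := by
    rw [hfil, card_filter_val_lt _ _ (by omega)]
  have hc2 : (N.filter (fun u => ¬ u.val < h)).card + h = 2*h - 1 := by
    have := Finset.card_filter_add_card_filter_not (s := N) (p := fun u => u.val < h)
    omega
  have e1 : ∑ u ∈ N.filter (fun u => u.val < h), (if u.val < h then (1:ℤ) else -1)
      = (h : ℤ) := by
    rw [Finset.sum_congr rfl (fun u hu => if_pos ((mem_filter.mp hu).2)), Finset.sum_const, hc1]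
    simp
  have e2 : ∑ u ∈ N.filter (fun u => ¬ u.val < h), (if u.val < h then (1:ℤ) else -1)
      = -(((N.filter (fun u => ¬ u.val < h)).card : ℤ)) := by
    rw [Finset.sum_congr rfl (fun u hu => if_neg ((mem_filter.mp hu).2)), Finset.sum_const]
    simp
  have := Finset.sum_filter_add_sum_filter_not N (fun u => u.val < h)
    (fun u => if u.val < h then (1:ℤ) else -1)
  rw [e1, e2] at this
  rw [← this]
  omega

end Stmt5Aux

/-- for `h ≥ 4` and `h - 3 < 2t ≤ 2(h - 3)` there is an approving
configuration with `n = 2h + 2t + 1` and `d = 2h - 1`. -/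
theorem stmt5 (h t : ℕ) (h4 : 4 ≤ h) (ht1 : h < 2 * t + 3) (ht2 : t + 3 ≤ h) :
    ∃ (G : SimpleGraph (Fin (2 * h + 2 * t + 1))) (f : Fin (2 * h + 2 * t + 1) → ℤ),
      IsConfig (2 * h - 1) h G f ∧ IsApproving G f := by
  classical
  refine ⟨Stmt5Aux.G h t, fun v => if v.val < h then (1:ℤ) else -1, ⟨?_, ?_, ?_⟩, ?_⟩
  · intro v
    exact Stmt5Aux.card_closedNbhd h t h4 ht2 v
  · intro v
    by_cases hv : v.val < h
    · exact Or.inl (if_pos hv)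
    · exact Or.inr (if_neg hv)
  · have : (univ.filter fun v : Fin (2*h+2*t+1) => (if v.val < h then (1:ℤ) else -1) = 1)
        = univ.filter fun v : Fin (2*h+2*t+1) => v.val < h := by
      apply Finset.filter_congr
      intro v _
      by_cases hv : v.val < h <;> simp [hv]
    rw [this, Stmt5Aux.card_filter_val_lt _ _ (by omega)]
  · unfold IsApproving numProponents
    beta_reduce
    have hsub : (univ.filter fun v : Fin (2*h+2*t+1) => ¬ v.val < h + t) ⊆
        univ.filter fun v : Fin (2*h+2*t+1) =>
          1 ≤ ∑ u ∈ closedNbhd (Stmt5Aux.G h t) v, (if u.val < h then (1:ℤ) else -1) := by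
      intro v hv
      exact mem_filter.mpr ⟨mem_univ _,
        Stmt5Aux.prop_sum h t h4 ht2 v (mem_filter.mp hv).2⟩
    have hcard : (univ.filter fun v : Fin (2*h+2*t+1) => ¬ v.val < h + t).card = h + t + 1 := by
      rw [Finset.filter_not, card_sdiff_of_subset (filter_subset _ _),
        Stmt5Aux.card_filter_val_lt _ _ (by omega), card_univ, Fintype.card_fin]
      omega
    have := Finset.card_le_card hsub
    omega
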